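/- Let G be a group, let (H,<) be a left-ordered group admitting a cofinal central element, and let φ : G → H be a group homomorphism whose image φ(G) is cofinal in (H,<). Let ≺ be a left-ordering of G that is lexicographic with respect to the short exact sequence 1 → ker φ → G → φ(G) → 1, with φ(G) carrying the restriction of <; that is, for every g ∈ G with g ∉ ker φ, id ≺ g if and only if id < φ(g). Then the secret left-ordering c_≺ ∈ CO(G) is an accumulation point of CO_g(G): every open neighborhood of c_≺ in CO(G) contains a genuine circular ordering of G. -/

import Mathlib

namespace Paper
set_option linter.unusedSectionVars false

variable {G : Type*} [Group G]

/-- A left-invariant circular ordering of a group `G`, as a function `G³ → {0, ±1} ⊆ ℤ`. -/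
def IsCircOrd (c : G → G → G → ℤ) : Prop :=
  (∀ g₁ g₂ g₃ : G, c g₁ g₂ g₃ = 0 ↔ (g₁ = g₂ ∨ g₁ = g₃ ∨ g₂ = g₃)) ∧
  (∀ g₁ g₂ g₃ : G, c g₁ g₂ g₃ = 0 ∨ c g₁ g₂ g₃ = 1 ∨ c g₁ g₂ g₃ = -1) ∧
  (∀ g₁ g₂ g₃ g₄ : G, c g₂ g₃ g₄ - c g₁ g₃ g₄ + c g₁ g₂ g₄ - c g₁ g₂ g₃ = 0) ∧
  (∀ g g₁ g₂ g₃ : G, c (g*g₁) (g*g₂) (g*g₃) = c g₁ g₂ g₃)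

/-- The space CO(G) of circular orderings, topologized as a subspace of `ℤ^{G³}`
(all relevant values lie in the discrete set `{0,±1}`, and `ℤ` carries the discrete
topology, so this is the subspace topology from the product topology on `{0,±1}^{G³}`). -/
abbrev CircOrd (G : Type*) [Group G] := {c : G → G → G → ℤ // IsCircOrd c}

open Classical in
/-- The cocycle `f_c`: `f_c(g,h) = 0` if `g = 1` or `h = 1` or `c(1,g,gh) = 1`,
and `f_c(g,h) = 1` otherwise (i.e. when `gh = 1 ≠ g`, or `c(1,gh,g) = 1`). -/
noncomputable def fc (c : G → G → G → ℤ) (g h : G) : ℤ :=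
  if g = 1 ∨ h = 1 ∨ c 1 g (g*h) = 1 then 0 else 1

/-- Multiplication in the central extension `G̃_c = G × ℤ`:
`(g,n)(h,m) = (gh, n+m+f_c(g,h))`. -/
noncomputable def liftMul (c : G → G → G → ℤ) (x y : G × ℤ) : G × ℤ :=
  (x.1 * y.1, x.2 + y.2 + fc c x.1 y.1)

/-- Powers (with natural number exponents) in `G̃_c`. -/
noncomputable def liftPow (c : G → G → G → ℤ) (x : G × ℤ) : ℕ → G × ℤ
  | 0 => (1, 0)
  | n+1 => liftMul c (liftPow c x n) x

/-- `[h]_c`: the unique integer `k` with `z_c^k ≤_c h <_c z_c^{k+1}`, where `<_c` is the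
left-ordering of `G̃_c` with positive cone `{(g,n) : n ≥ 0} ∖ {(1,0)}` and `z_c = (1,1)`.
Since `z_c^k = (1,k)` and `f_c(g,g⁻¹) = 1` for `g ≠ 1`, this is exactly the second
coordinate of `h`. -/
def liftFloor (h : G × ℤ) : ℤ := h.2

/-- The translation number `r̃ot_c(h)` of `h ∈ G̃_c`: the limit of `[hⁿ]_c / n`
(`limUnder` picks out the limit when it exists). -/
noncomputable def rotTilde (c : G → G → G → ℤ) (h : G × ℤ) : ℝ :=
  Filter.limUnder Filter.atTop (fun n : ℕ => (liftFloor (liftPow c h n) : ℝ) / (n : ℝ))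

/-- The rotation number `rot_c(g) ∈ ℝ/ℤ`, computed using the lift `(g,0) ∈ G̃_c`
(it is independent of the choice of lift). -/
noncomputable def rotc (c : G → G → G → ℤ) (g : G) : AddCircle (1:ℝ) :=
  ((rotTilde c (g, 0) : ℝ) : AddCircle (1:ℝ))

/-- `τ_c(g,h) = r̃ot_c(g̃h̃) − r̃ot_c(g̃) − r̃ot_c(h̃)`, computed using the lifts `(g,0)`
and `(h,0)` (it is independent of the choice of lifts). -/
noncomputable def tauc (c : G → G → G → ℤ) (g h : G) : ℝ :=
  rotTilde c (liftMul c (g,0) (h,0)) - rotTilde c (g,0) - rotTilde c (h,0)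

/-- A positive cone of a group `G`: `P · P ⊆ P` and `P ∪ P⁻¹ = G ∖ {1}`.
It determines a left-ordering by `g < h` iff `g⁻¹h ∈ P`. -/
def IsPositiveCone (P : Set G) : Prop :=
  (∀ a ∈ P, ∀ b ∈ P, a * b ∈ P) ∧ (P ∪ P⁻¹ = {g : G | g ≠ 1})

/-- The left-ordering determined by a positive cone. -/
def coneLt (P : Set G) (a b : G) : Prop := a⁻¹ * b ∈ P

open Classical in
/-- The secret left-ordering `c_<` determined by a positive cone `P`:
`c_<(a,b,c) = sign σ` where `σ` is the permutation sorting `(a,b,c)` into increasing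
order, i.e. `c_< = 1` on positively cyclically ordered triples, `-1` on negatively
cyclically ordered triples, and `0` when the entries are not all distinct. -/
noncomputable def circOfCone (P : Set G) : G → G → G → ℤ := fun a b c =>
  if (coneLt P a b ∧ coneLt P b c) ∨ (coneLt P b c ∧ coneLt P c a) ∨
      (coneLt P c a ∧ coneLt P a b) then 1
  else if (coneLt P c b ∧ coneLt P b a) ∨ (coneLt P b a ∧ coneLt P a c) ∨
      (coneLt P a c ∧ coneLt P c b) then -1
  else 0

/-- A circular ordering is a *secret left-ordering* if it is `c_<` for some
left-ordering `<` of `G`. -/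
def IsSecret (c : G → G → G → ℤ) : Prop := ∃ P : Set G, IsPositiveCone P ∧ c = circOfCone P


/-! ### Auxiliary machinery -/

section Aux

variable {K : Type*} [Group K]

open Classical in
/-- Cyclic sign associated to an arbitrary binary relation. -/
noncomputable def cyc (L : K → K → Prop) : K → K → K → ℤ := fun a b c =>
  if (L a b ∧ L b c) ∨ (L b c ∧ L c a) ∨ (L c a ∧ L a b) then 1
  else if (L c b ∧ L b a) ∨ (L b a ∧ L a c) ∨ (L a c ∧ L c b) then -1
  else 0

theorem circOfCone_eq_cyc (P : Set K) : circOfCone P = cyc (coneLt P) := rfl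

/-- Strict total order data. -/
structure IsSTO (L : K → K → Prop) : Prop where
  trans : ∀ {a b c}, L a b → L b c → L a c
  irrefl : ∀ a, ¬ L a a
  total : ∀ a b, a ≠ b → L a b ∨ L b a

section CycLemmas

variable {L : K → K → Prop}

theorem IsSTO.asymm (h : IsSTO L) {a b : K} (hab : L a b) : ¬ L b a :=
  fun hba => h.irrefl a (h.trans hab hba)

theorem IsSTO.ne (h : IsSTO L) {a b : K} (hab : L a b) : a ≠ b := by
  rintro rfl; exact h.irrefl a hab

open Classical in
theorem cyc_formula (h : IsSTO L) {a b c : K} (hab : a ≠ b) (hac : a ≠ c) (hbc : b ≠ c) :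
    cyc L a b c = 2 * ((if L a b then (1:ℤ) else 0) + (if L b c then (1:ℤ) else 0)
      + (if L c a then (1:ℤ) else 0)) - 3 := by
  rcases h.total a b hab with h1 | h1 <;> rcases h.total b c hbc with h2 | h2 <;>
    rcases h.total c a (Ne.symm hac) with h3 | h3
  · exact absurd (h.trans (h.trans h1 h2) h3) (h.irrefl a)
  · simp [cyc, h1, h2, h3, h.asymm h1, h.asymm h2, h.asymm h3]
  · simp [cyc, h1, h2, h3, h.asymm h1, h.asymm h2, h.asymm h3]
  · simp [cyc, h1, h2, h3, h.asymm h1, h.asymm h2, h.asymm h3]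
  · simp [cyc, h1, h2, h3, h.asymm h1, h.asymm h2, h.asymm h3]
  · simp [cyc, h1, h2, h3, h.asymm h1, h.asymm h2, h.asymm h3]
  · simp [cyc, h1, h2, h3, h.asymm h1, h.asymm h2, h.asymm h3]
  · exact absurd (h.trans h2 h1) (h.asymm h3)

theorem cyc_values (L : K → K → Prop) (a b c : K) :
    cyc L a b c = 0 ∨ cyc L a b c = 1 ∨ cyc L a b c = -1 := by
  unfold cyc; split_ifs <;> simp

theorem cyc_eq_zero_of_eq₁₂ (h : IsSTO L) (a c : K) : cyc L a a c = 0 := by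
  classical
  unfold cyc
  rw [if_neg, if_neg]
  · rintro (⟨h1, h2⟩ | ⟨h1, h2⟩ | ⟨h1, h2⟩)
    · exact h.irrefl a h2
    · exact h.irrefl a h1
    · exact h.asymm h1 h2
  · rintro (⟨h1, h2⟩ | ⟨h1, h2⟩ | ⟨h1, h2⟩)
    · exact h.irrefl a h1
    · exact h.asymm h1 h2
    · exact h.irrefl a h2

theorem cyc_rot (L : K → K → Prop) (a b c : K) : cyc L a b c = cyc L b c a := by
  classical
  unfold cyc
  rw [if_congr or_rotate rfl (if_congr or_rotate.symm rfl rfl)]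

theorem cyc_eq_zero_of_eq₂₃ (h : IsSTO L) (a b : K) : cyc L a b b = 0 := by
  rw [cyc_rot L a b b]; exact cyc_eq_zero_of_eq₁₂ h b a

theorem cyc_eq_zero_of_eq₁₃ (h : IsSTO L) (a b : K) : cyc L a b a = 0 := by
  rw [cyc_rot L a b a]; exact cyc_eq_zero_of_eq₂₃ h b a

theorem cyc_swap (h : IsSTO L) (a b c : K) : cyc L b a c = - cyc L a b c := by
  have hexcl : ¬ (((L a b ∧ L b c) ∨ (L b c ∧ L c a) ∨ (L c a ∧ L a b)) ∧
      ((L c b ∧ L b a) ∨ (L b a ∧ L a c) ∨ (L a c ∧ L c b))) := by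
    rintro ⟨⟨h1, h2⟩ | ⟨h1, h2⟩ | ⟨h1, h2⟩, ⟨h3, h4⟩ | ⟨h3, h4⟩ | ⟨h3, h4⟩⟩
    · exact h.asymm h1 h4
    · exact h.asymm h1 h3
    · exact h.asymm h2 h4
    · exact h.asymm h1 h3
    · exact h.asymm h2 h4
    · exact h.asymm h2 h3
    · exact h.asymm h2 h4
    · exact h.asymm h2 h3
    · exact h.asymm h1 h3
  classical
  have key : cyc L b a c = if (L c b ∧ L b a) ∨ (L b a ∧ L a c) ∨ (L a c ∧ L c b) then (1:ℤ)
      else if (L a b ∧ L b c) ∨ (L b c ∧ L c a) ∨ (L c a ∧ L a b) then -1 else 0 := by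
    unfold cyc
    exact if_congr or_rotate.symm rfl (if_congr or_rotate rfl rfl)
  rw [key]
  unfold cyc
  by_cases k1 : (L a b ∧ L b c) ∨ (L b c ∧ L c a) ∨ (L c a ∧ L a b) <;>
    by_cases k2 : (L c b ∧ L b a) ∨ (L b a ∧ L a c) ∨ (L a c ∧ L c b)
  · exact absurd ⟨k1, k2⟩ hexcl
  · simp [k1, k2]
  · simp [k1, k2]
  · simp [k1, k2]

theorem cyc_swap23 (h : IsSTO L) (a b c : K) : cyc L a c b = - cyc L a b c := by
  rw [cyc_rot L a c b, cyc_swap h b c a, ← cyc_rot L a b c]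

theorem cyc_eq_zero_iff (h : IsSTO L) (a b c : K) :
    cyc L a b c = 0 ↔ (a = b ∨ a = c ∨ b = c) := by
  constructor
  · intro h0
    by_contra hne
    push_neg at hne
    obtain ⟨hab, hac, hbc⟩ := hne
    rw [cyc_formula h hab hac hbc] at h0
    split_ifs at h0 <;> omega
  · rintro (rfl | rfl | rfl)
    · exact cyc_eq_zero_of_eq₁₂ h a c
    · exact cyc_eq_zero_of_eq₁₃ h a b
    · exact cyc_eq_zero_of_eq₂₃ h a b

theorem cyc_cocycle (h : IsSTO L) (g1 g2 g3 g4 : K) :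
    cyc L g2 g3 g4 - cyc L g1 g3 g4 + cyc L g1 g2 g4 - cyc L g1 g2 g3 = 0 := by
  classical
  by_cases e12 : g1 = g2
  · subst e12
    rw [cyc_eq_zero_of_eq₁₂ h, cyc_eq_zero_of_eq₁₂ h]; ring
  by_cases e13 : g1 = g3
  · subst e13
    rw [cyc_eq_zero_of_eq₁₂ h, cyc_eq_zero_of_eq₁₃ h, cyc_swap h g1 g2 g4]; ring
  by_cases e14 : g1 = g4
  · subst e14
    rw [cyc_eq_zero_of_eq₁₃ h, cyc_eq_zero_of_eq₁₃ h, ← cyc_rot L g1 g2 g3]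
    ring
  by_cases e23 : g2 = g3
  · subst e23
    rw [cyc_eq_zero_of_eq₁₂ h, cyc_eq_zero_of_eq₂₃ h]; ring
  by_cases e24 : g2 = g4
  · subst e24
    rw [cyc_eq_zero_of_eq₁₃ h, cyc_eq_zero_of_eq₂₃ h, cyc_swap23 h g1 g2 g3]
    ring
  by_cases e34 : g3 = g4
  · subst e34
    rw [cyc_eq_zero_of_eq₂₃ h, cyc_eq_zero_of_eq₂₃ h]; ring
  · rw [cyc_formula h e23 e24 e34, cyc_formula h e13 e14 e34,
      cyc_formula h e12 e14 e24, cyc_formula h e12 e13 e23]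
    have c1 : (if L g4 g2 then (1:ℤ) else 0) + (if L g2 g4 then (1:ℤ) else 0) = 1 := by
      rcases h.total g2 g4 e24 with hh | hh
      · rw [if_pos hh, if_neg (h.asymm hh)]; norm_num
      · rw [if_pos hh, if_neg (h.asymm hh)]; norm_num
    have c2 : (if L g3 g1 then (1:ℤ) else 0) + (if L g1 g3 then (1:ℤ) else 0) = 1 := by
      rcases h.total g1 g3 e13 with hh | hh
      · rw [if_pos hh, if_neg (h.asymm hh)]; norm_num
      · rw [if_pos hh, if_neg (h.asymm hh)]; norm_num
    linarith


set_option maxHeartbeats 1000000 in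
open Classical in
theorem cyc_congr_rot (L L' : K → K → Prop) (B : K → Prop) (S : Set K)
    (hsame : ∀ p ∈ S, ∀ q ∈ S, (B p ↔ B q) → (L p q ↔ L' p q))
    (hcross : ∀ p ∈ S, ∀ q ∈ S, ¬ B p → B q → L p q ∧ ¬ L q p ∧ L' q p ∧ ¬ L' p q)
    {x y z : K} (hx : x ∈ S) (hy : y ∈ S) (hz : z ∈ S) :
    cyc L x y z = cyc L' x y z := by
  classical
  by_cases Bx : B x <;> by_cases By : B y <;> by_cases Bz : B z
  · unfold cyc
    have exy : L x y ↔ L' x y := hsame x hx y hy (iff_of_true Bx By)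
    have eyx : L y x ↔ L' y x := hsame y hy x hx (iff_of_true By Bx)
    have eyz : L y z ↔ L' y z := hsame y hy z hz (iff_of_true By Bz)
    have ezy : L z y ↔ L' z y := hsame z hz y hy (iff_of_true Bz By)
    have ezx : L z x ↔ L' z x := hsame z hz x hx (iff_of_true Bz Bx)
    have exz : L x z ↔ L' x z := hsame x hx z hz (iff_of_true Bx Bz)
    clear hsame hcross hx hy hz Bx By Bz
    refine if_congr ?_ rfl (if_congr ?_ rfl rfl)
    · tauto
    · tauto
  · unfold cyc
    have exy : L x y ↔ L' x y := hsame x hx y hy (iff_of_true Bx By)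
    have eyx : L y x ↔ L' y x := hsame y hy x hx (iff_of_true By Bx)
    obtain ⟨c1zy, c2zy, c3zy, c4zy⟩ := hcross z hz y hy Bz By
    obtain ⟨c1zx, c2zx, c3zx, c4zx⟩ := hcross z hz x hx Bz Bx
    clear hsame hcross hx hy hz Bx By Bz
    refine if_congr ?_ rfl (if_congr ?_ rfl rfl)
    · tauto
    · tauto
  · unfold cyc
    obtain ⟨c1yx, c2yx, c3yx, c4yx⟩ := hcross y hy x hx By Bx
    obtain ⟨c1yz, c2yz, c3yz, c4yz⟩ := hcross y hy z hz By Bz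
    have ezx : L z x ↔ L' z x := hsame z hz x hx (iff_of_true Bz Bx)
    have exz : L x z ↔ L' x z := hsame x hx z hz (iff_of_true Bx Bz)
    clear hsame hcross hx hy hz Bx By Bz
    refine if_congr ?_ rfl (if_congr ?_ rfl rfl)
    · tauto
    · tauto
  · unfold cyc
    obtain ⟨c1yx, c2yx, c3yx, c4yx⟩ := hcross y hy x hx By Bx
    have eyz : L y z ↔ L' y z := hsame y hy z hz (iff_of_false By Bz)
    have ezy : L z y ↔ L' z y := hsame z hz y hy (iff_of_false Bz By)
    obtain ⟨c1zx, c2zx, c3zx, c4zx⟩ := hcross z hz x hx Bz Bx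
    clear hsame hcross hx hy hz Bx By Bz
    refine if_congr ?_ rfl (if_congr ?_ rfl rfl)
    · tauto
    · tauto
  · unfold cyc
    obtain ⟨c1xy, c2xy, c3xy, c4xy⟩ := hcross x hx y hy Bx By
    have eyz : L y z ↔ L' y z := hsame y hy z hz (iff_of_true By Bz)
    have ezy : L z y ↔ L' z y := hsame z hz y hy (iff_of_true Bz By)
    obtain ⟨c1xz, c2xz, c3xz, c4xz⟩ := hcross x hx z hz Bx Bz
    clear hsame hcross hx hy hz Bx By Bz
    refine if_congr ?_ rfl (if_congr ?_ rfl rfl)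
    · tauto
    · tauto
  · unfold cyc
    obtain ⟨c1xy, c2xy, c3xy, c4xy⟩ := hcross x hx y hy Bx By
    obtain ⟨c1zy, c2zy, c3zy, c4zy⟩ := hcross z hz y hy Bz By
    have ezx : L z x ↔ L' z x := hsame z hz x hx (iff_of_false Bz Bx)
    have exz : L x z ↔ L' x z := hsame x hx z hz (iff_of_false Bx Bz)
    clear hsame hcross hx hy hz Bx By Bz
    refine if_congr ?_ rfl (if_congr ?_ rfl rfl)
    · tauto
    · tauto
  · unfold cyc
    have exy : L x y ↔ L' x y := hsame x hx y hy (iff_of_false Bx By)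
    have eyx : L y x ↔ L' y x := hsame y hy x hx (iff_of_false By Bx)
    obtain ⟨c1yz, c2yz, c3yz, c4yz⟩ := hcross y hy z hz By Bz
    obtain ⟨c1xz, c2xz, c3xz, c4xz⟩ := hcross x hx z hz Bx Bz
    clear hsame hcross hx hy hz Bx By Bz
    refine if_congr ?_ rfl (if_congr ?_ rfl rfl)
    · tauto
    · tauto
  · unfold cyc
    have exy : L x y ↔ L' x y := hsame x hx y hy (iff_of_false Bx By)
    have eyx : L y x ↔ L' y x := hsame y hy x hx (iff_of_false By Bx)
    have eyz : L y z ↔ L' y z := hsame y hy z hz (iff_of_false By Bz)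
    have ezy : L z y ↔ L' z y := hsame z hz y hy (iff_of_false Bz By)
    have ezx : L z x ↔ L' z x := hsame z hz x hx (iff_of_false Bz Bx)
    have exz : L x z ↔ L' x z := hsame x hx z hz (iff_of_false Bx Bz)
    clear hsame hcross hx hy hz Bx By Bz
    refine if_congr ?_ rfl (if_congr ?_ rfl rfl)
    · tauto
    · tauto

end CycLemmas


section ConeOrder

variable {P : Set K}

theorem IsPositiveCone.one_not_mem (hP : IsPositiveCone P) : (1:K) ∉ P := by
  intro h
  have h2 : (1:K) ∈ P ∪ P⁻¹ := Or.inl h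
  rw [hP.2] at h2
  exact h2 rfl

theorem coneLt_trans (hP : IsPositiveCone P) {a b c : K}
    (h1 : coneLt P a b) (h2 : coneLt P b c) : coneLt P a c := by
  have h3 := hP.1 _ h1 _ h2
  have e : (a⁻¹*b)*(b⁻¹*c) = a⁻¹*c := by group
  rwa [e] at h3

theorem coneLt_irrefl (hP : IsPositiveCone P) (a : K) : ¬ coneLt P a a := by
  unfold coneLt
  rw [inv_mul_cancel]
  exact hP.one_not_mem

theorem coneLt_asymm (hP : IsPositiveCone P) {a b : K} (h1 : coneLt P a b) :
    ¬ coneLt P b a := fun h2 => coneLt_irrefl hP a (coneLt_trans hP h1 h2)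

theorem coneLt_total (hP : IsPositiveCone P) {a b : K} (hne : a ≠ b) :
    coneLt P a b ∨ coneLt P b a := by
  have h1 : a⁻¹ * b ∈ P ∪ P⁻¹ := by
    rw [hP.2]
    simpa [Set.mem_setOf_eq, inv_mul_eq_one] using hne
  rcases h1 with h1 | h1
  · exact Or.inl h1
  · right
    have : (a⁻¹*b)⁻¹ ∈ P := h1
    have e : (a⁻¹*b)⁻¹ = b⁻¹*a := by group
    rwa [e] at this

theorem coneLt_ne (hP : IsPositiveCone P) {a b : K} (h1 : coneLt P a b) : a ≠ b := by
  rintro rfl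
  exact coneLt_irrefl hP a h1

theorem coneLt_mul_left {a b : K} (g : K) :
    coneLt P (g*a) (g*b) ↔ coneLt P a b := by
  unfold coneLt
  rw [show (g*a)⁻¹*(g*b) = a⁻¹*b by group]

theorem coneLt_sto (hP : IsPositiveCone P) : IsSTO (coneLt P) :=
  ⟨fun h1 h2 => coneLt_trans hP h1 h2, coneLt_irrefl hP, fun _ _ h => coneLt_total hP h⟩

/-- Non-strict version of `coneLt`. -/
def coneLe (P : Set K) (a b : K) : Prop := coneLt P a b ∨ a = b

theorem coneLe_refl (a : K) : coneLe P a a := Or.inr rfl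

theorem coneLe_of_lt {a b : K} (h : coneLt P a b) : coneLe P a b := Or.inl h

theorem coneLe_trans_lt (hP : IsPositiveCone P) {a b c : K}
    (h1 : coneLe P a b) (h2 : coneLt P b c) : coneLt P a c := by
  rcases h1 with h1 | rfl
  · exact coneLt_trans hP h1 h2
  · exact h2

theorem coneLt_trans_le (hP : IsPositiveCone P) {a b c : K}
    (h1 : coneLt P a b) (h2 : coneLe P b c) : coneLt P a c := by
  rcases h2 with h2 | rfl
  · exact coneLt_trans hP h1 h2
  · exact h1

theorem coneLe_trans (hP : IsPositiveCone P) {a b c : K}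
    (h1 : coneLe P a b) (h2 : coneLe P b c) : coneLe P a c := by
  rcases h1 with h1 | rfl
  · rcases h2 with h2 | rfl
    · exact coneLe_of_lt (coneLt_trans hP h1 h2)
    · exact coneLe_of_lt h1
  · exact h2

theorem coneLe_mul_left {a b : K} (g : K) :
    coneLe P (g*a) (g*b) ↔ coneLe P a b := by
  unfold coneLe
  rw [coneLt_mul_left g, mul_right_inj]

theorem coneLt_of_not_le (hP : IsPositiveCone P) {a b : K} (h : ¬ coneLe P a b) :
    coneLt P b a := by
  rcases coneLt_total hP (fun e : b = a => h (Or.inr e.symm)) with h1 | h1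
  · exact h1
  · exact absurd (coneLe_of_lt h1) h

end ConeOrder

section Central

variable {P : Set K} {w : K}

theorem central_zpow (hw : ∀ h : K, w * h = h * w) (j : ℤ) (h : K) :
    w^j * h = h * w^j :=
  (Commute.zpow_left (hw h) j).eq

theorem central_zpow_mem (hP : IsPositiveCone P) (hwP : w ∈ P) :
    ∀ j : ℤ, 0 < j → w^j ∈ P := by
  have hn : ∀ m : ℕ, w^(m+1) ∈ P := by
    intro m
    induction m with
    | zero => simpa using hwP
    | succ k ih =>
      have := hP.1 _ ih _ hwP
      rwa [← pow_succ] at this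
  intro j hj
  obtain ⟨m, rfl⟩ : ∃ m : ℕ, j = (m:ℤ)+1 := ⟨(j-1).toNat, by omega⟩
  rw [show ((m:ℤ)+1) = ((m+1 : ℕ) : ℤ) by push_cast; ring, zpow_natCast]
  exact hn m

theorem coneLt_zpow_iff (hP : IsPositiveCone P) (hwP : w ∈ P) {a b : ℤ} :
    coneLt P (w^a) (w^b) ↔ a < b := by
  have key : coneLt P (w^a) (w^b) ↔ w^(b-a) ∈ P := by
    unfold coneLt
    rw [← zpow_neg, ← zpow_add, show -a + b = b - a by ring]
  rw [key]
  constructor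
  · intro hmem
    by_contra hab
    push_neg at hab
    rcases lt_or_eq_of_le hab with hlt | rfl
    · have h2 : w^(a-b) ∈ P := central_zpow_mem hP hwP _ (by omega)
      have h3 := hP.1 _ hmem _ h2
      rw [← zpow_add, show (b-a) + (a-b) = 0 by ring, zpow_zero] at h3
      exact hP.one_not_mem h3
    · rw [sub_self, zpow_zero] at hmem
      exact hP.one_not_mem hmem
  · intro hab
    exact central_zpow_mem hP hwP _ (by omega)

theorem zpow_inj_of_cone (hP : IsPositiveCone P) (hwP : w ∈ P) {a b : ℤ}
    (h : w^a = w^b) : a = b := by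
  by_contra hne
  rcases lt_or_gt_of_ne hne with h1 | h1
  · have := (coneLt_zpow_iff hP hwP).2 h1
    rw [h] at this
    exact coneLt_irrefl hP _ this
  · have := (coneLt_zpow_iff hP hwP).2 h1
    rw [h] at this
    exact coneLt_irrefl hP _ this

theorem coneLe_zpow_iff (hP : IsPositiveCone P) (hwP : w ∈ P) {a b : ℤ} :
    coneLe P (w^a) (w^b) ↔ a ≤ b := by
  constructor
  · rintro (h | h)
    · exact le_of_lt ((coneLt_zpow_iff hP hwP).1 h)
    · exact le_of_eq (zpow_inj_of_cone hP hwP h)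
  · intro h
    rcases lt_or_eq_of_le h with h | rfl
    · exact coneLe_of_lt ((coneLt_zpow_iff hP hwP).2 h)
    · exact coneLe_refl _

theorem exists_floor (hP : IsPositiveCone P) (hwP : w ∈ P)
    (hcof : ∀ h : K, ∃ m k : ℤ, coneLt P (w^m) h ∧ coneLt P h (w^k)) (h : K) :
    ∃ F : ℤ, coneLe P (w^F) h ∧ coneLt P h (w^(F+1)) := by
  obtain ⟨m, k, hm, hk⟩ := hcof h
  have hbdd : ∀ j : ℤ, coneLe P (w^j) h → j ≤ k := by
    intro j hj
    have : coneLt P (w^j) (w^k) := coneLe_trans_lt hP hj hk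
    exact le_of_lt ((coneLt_zpow_iff hP hwP).1 this)
  obtain ⟨F, hF, hFmax⟩ := Int.exists_greatest_of_bdd ⟨k, hbdd⟩ ⟨m, coneLe_of_lt hm⟩
  refine ⟨F, hF, ?_⟩
  have hnot : ¬ coneLe P (w^(F+1)) h := fun hc => by have := hFmax _ hc; omega
  exact coneLt_of_not_le hP hnot

theorem floor_unique (hP : IsPositiveCone P) (hwP : w ∈ P) {h : K} {m k : ℤ}
    (h1 : coneLe P (w^m) h) (h2 : coneLt P h (w^(m+1)))
    (h3 : coneLe P (w^k) h) (h4 : coneLt P h (w^(k+1))) : m = k := by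
  have a1 : m < k + 1 := (coneLt_zpow_iff hP hwP).1 (coneLe_trans_lt hP h1 h4)
  have a2 : k < m + 1 := (coneLt_zpow_iff hP hwP).1 (coneLe_trans_lt hP h3 h2)
  omega

end Central


section MoreCone

variable {P : Set K}

theorem coneLt_one_left {a : K} : coneLt P 1 a ↔ a ∈ P := by
  unfold coneLt; rw [inv_one, one_mul]

theorem coneLe_of_not_lt (hP : IsPositiveCone P) {a b : K} (h : ¬ coneLt P a b) :
    coneLe P b a := by
  by_cases he : b = a
  · exact Or.inr he
  · rcases coneLt_total hP he with h1 | h1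
    · exact Or.inl h1
    · exact absurd h1 h

open Classical in
theorem cyc_ext {L L' : K → K → Prop} (h : ∀ a b, L a b ↔ L' a b) (x y z : K) :
    cyc L x y z = cyc L' x y z := by
  classical
  unfold cyc
  exact if_congr (by simp only [h]) rfl (if_congr (by simp only [h]) rfl rfl)

end MoreCone

section Main

variable {Γ : Type*} [Group Γ] {H' : Type*} [Group H']

set_option maxHeartbeats 1000000 in
theorem main_construct (P : Set H') (hP : IsPositiveCone P)
    (ζ : H') (hζc : ∀ h : H', ζ * h = h * ζ) (hζP : ζ ∈ P)
    (hζcof : ∀ h : H', ∃ m k : ℤ, coneLt P (ζ^m) h ∧ coneLt P h (ζ^k))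
    (φ : Γ →* H')
    (himg : ∀ h : H', ∃ a b : Γ, coneLt P (φ a) h ∧ coneLt P h (φ b))
    (Q : Set Γ) (hQ : IsPositiveCone Q)
    (hlex : ∀ g : Γ, φ g ≠ 1 → (g ∈ Q ↔ φ g ∈ P))
    (N : ℤ) (hN : 0 ≤ N) :
    ∃ n : ℤ, N ≤ n ∧ 1 ≤ n ∧ ∃ c : Γ → Γ → Γ → ℤ, IsCircOrd c ∧ ¬ IsSecret c ∧
      ∀ x y z : Γ,
        (∀ p ∈ ({x,y,z} : Set Γ), ∀ q ∈ ({x,y,z} : Set Γ),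
          coneLt P (ζ^(-n)) ((φ p)⁻¹ * φ q)) →
        (∀ e ∈ ({x,y,z} : Set Γ),
          coneLt P (ζ^(-n)) (φ e) ∧ coneLt P (φ e) (ζ^n)) →
        c x y z = circOfCone Q x y z := by
  classical
  obtain ⟨-, b, -, hb⟩ := himg (ζ^(N+2))
  set p : H' := φ b with hpdef
  obtain ⟨s, hs1, hs2⟩ := exists_floor hP hζP hζcof p
  have hsN : N+2 ≤ s := by
    have h1 : coneLt P (ζ^(N+2)) (ζ^(s+1)) := coneLt_trans hP hb hs2
    have := (coneLt_zpow_iff hP hζP).1 h1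
    omega
  set n : ℤ := 2*s+2 with hndef
  have hn1 : 1 ≤ n := by omega
  have hnN : N ≤ n := by omega
  set w : H' := ζ^n with hwdef
  have hwc : ∀ h : H', w * h = h * w := fun h => central_zpow hζc n h
  have hwP : w ∈ P := central_zpow_mem hP hζP n (by omega)
  -- powers of w are powers of ζ
  have hwz : ∀ j : ℤ, w^j = ζ^(n*j) := fun j => by rw [hwdef, ← zpow_mul]
  have hwcof : ∀ h : H', ∃ m k : ℤ, coneLt P (w^m) h ∧ coneLt P h (w^k) := by
    intro h
    obtain ⟨m, k, h1, h2⟩ := hζcof h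
    set A : ℤ := |m| + |k| + 1 with hA
    have hA1 : 1 ≤ A := by
      have := abs_nonneg m
      have := abs_nonneg k
      omega
    have hAm : -A ≤ m := by
      have := neg_abs_le m
      have := abs_nonneg k
      omega
    have hAk : k ≤ A := by
      have := le_abs_self k
      have := abs_nonneg m
      omega
    have hnA : A ≤ n*A := le_mul_of_one_le_left (by omega) hn1
    refine ⟨-A, A, ?_, ?_⟩
    · rw [hwz]
      have hle : coneLe P (ζ^(n * (-A))) (ζ^m) := (coneLe_zpow_iff hP hζP).2 (by
        have : n * (-A) = -(n*A) := by ring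
        omega)
      exact coneLe_trans_lt hP hle h1
    · rw [hwz]
      have hle : coneLe P (ζ^k) (ζ^(n * A)) := (coneLe_zpow_iff hP hζP).2 (by omega)
      exact coneLt_trans_le hP h2 hle
  choose F hF using fun h => exists_floor hP hwP hwcof h
  have hF1 : ∀ h : H', coneLe P (w^(F h)) h := fun h => (hF h).1
  have hF2 : ∀ h : H', coneLt P h (w^(F h + 1)) := fun h => (hF h).2
  set rep : H' → H' := fun h => w^(-(F h)) * h with hrepdef
  have hFu : ∀ (h : H') (m : ℤ), coneLe P (w^m) h → coneLt P h (w^(m+1)) → F h = m :=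
    fun h m a c => floor_unique hP hwP (hF1 h) (hF2 h) a c
  have hrep1 : ∀ h : H', coneLe P 1 (rep h) := by
    intro h
    have h2 := (coneLe_mul_left (P := P) (w^(-(F h)))).2 (hF1 h)
    rwa [← zpow_add, neg_add_cancel, zpow_zero] at h2
  have hrep2 : ∀ h : H', coneLt P (rep h) w := by
    intro h
    have h2 := (coneLt_mul_left (P := P) (w^(-(F h)))).2 (hF2 h)
    rwa [← zpow_add, show -(F h) + (F h + 1) = 1 by ring, zpow_one] at h2
  have hrep_decomp : ∀ h : H', h = w^(F h) * rep h := by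
    intro h
    rw [hrepdef]
    rw [← mul_assoc, ← zpow_add, add_neg_cancel, zpow_zero, one_mul]
  have hF_shift : ∀ (j : ℤ) (h : H'), F (w^j * h) = j + F h := by
    intro j h
    apply hFu
    · have := (coneLe_mul_left (P := P) (w^j)).2 (hF1 h)
      rwa [← zpow_add] at this
    · have := (coneLt_mul_left (P := P) (w^j)).2 (hF2 h)
      rwa [← zpow_add, show j + (F h + 1) = (j + F h) + 1 by ring] at this
  have hrep_of : ∀ h : H', coneLe P 1 h → coneLt P h w → rep h = h := by
    intro h a c
    have hF0 : F h = 0 := hFu h 0 (by rw [zpow_zero]; exact a)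
      (by rw [zero_add, zpow_one]; exact c)
    rw [hrepdef]
    simp [hF0]
  have hrep_neg : ∀ h : H', coneLe P w⁻¹ h → coneLt P h 1 → rep h = w * h := by
    intro h a c
    have hFm : F h = -1 := hFu h (-1) (by rw [zpow_neg_one]; exact a)
      (by rw [neg_add_cancel, zpow_zero]; exact c)
    rw [hrepdef]
    simp [hFm]
  -- the cut relation
  set L : Γ → Γ → Prop :=
    fun a b => coneLt P (rep (φ a)) (rep (φ b)) ∨ (rep (φ a) = rep (φ b) ∧ a⁻¹ * b ∈ Q)
    with hLdef
  have hLsto : IsSTO L := by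
    constructor
    · intro a b c h1 h2
      simp only [hLdef] at h1 h2 ⊢
      rcases h1 with h1 | ⟨e1, q1⟩ <;> rcases h2 with h2 | ⟨e2, q2⟩
      · exact Or.inl (coneLt_trans hP h1 h2)
      · exact Or.inl (e2 ▸ h1)
      · rw [e1]; exact Or.inl h2
      · refine Or.inr ⟨e1.trans e2, ?_⟩
        have h3 := hQ.1 _ q1 _ q2
        rwa [show (a⁻¹*b)*(b⁻¹*c) = a⁻¹*c by group] at h3
    · intro a h
      simp only [hLdef] at h
      rcases h with h | ⟨-, q⟩
      · exact coneLt_irrefl hP _ h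
      · rw [inv_mul_cancel] at q
        exact hQ.one_not_mem q
    · intro a b hne
      simp only [hLdef]
      by_cases he : rep (φ a) = rep (φ b)
      · have hmem : a⁻¹ * b ∈ Q ∪ Q⁻¹ := by
          rw [hQ.2]
          simpa [Set.mem_setOf_eq, inv_mul_eq_one] using hne
        rcases hmem with h | h
        · exact Or.inl (Or.inr ⟨he, h⟩)
        · refine Or.inr (Or.inr ⟨he.symm, ?_⟩)
          have : (a⁻¹*b)⁻¹ ∈ Q := h
          rwa [show (a⁻¹*b)⁻¹ = b⁻¹*a by group] at this
      · rcases coneLt_total hP he with h | h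
        · exact Or.inl (Or.inl h)
        · exact Or.inr (Or.inl h)
  -- basic positivity facts about p
  have hp_pos : coneLt P 1 p := by
    have h0 : coneLt P (ζ^(0:ℤ)) (ζ^(N+2)) := (coneLt_zpow_iff hP hζP).2 (by omega)
    rw [zpow_zero] at h0
    exact coneLt_trans hP h0 hb
  have hpw : coneLt P p w := by
    rw [hwdef]
    exact coneLt_trans_le hP hs2 ((coneLe_zpow_iff hP hζP).2 (by omega))
  have hmul_lt : ∀ {a c : H'} {i j : ℤ}, coneLt P a (ζ^i) → coneLt P c (ζ^j) →
      coneLt P (a*c) (ζ^(i+j)) := by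
    intro a c i j h1 h2
    have b1 : coneLt P (a*c) (a*ζ^j) := (coneLt_mul_left a).2 h2
    rw [← central_zpow hζc j a] at b1
    have b3 : coneLt P (ζ^j * a) (ζ^j * ζ^i) := (coneLt_mul_left _).2 h1
    rw [← zpow_add, show j + i = i + j by ring] at b3
    exact coneLt_trans hP b1 b3
  have hmul_le : ∀ {a c : H'} {i j : ℤ}, coneLe P (ζ^i) a → coneLe P (ζ^j) c →
      coneLe P (ζ^(i+j)) (a*c) := by
    intro a c i j h1 h2
    have b1 : coneLe P (a*ζ^j) (a*c) := (coneLe_mul_left a).2 h2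
    rw [← central_zpow hζc j a] at b1
    have b3 : coneLe P (ζ^j * ζ^i) (ζ^j * a) := (coneLe_mul_left _).2 h1
    rw [← zpow_add, show j + i = i + j by ring] at b3
    exact coneLe_trans hP b3 b1
  have hp2w : coneLt P (p*p) w := by
    have h1 := hmul_lt hs2 hs2
    rwa [show (s+1)+(s+1) = n by omega, ← hwdef] at h1
  have hwp4 : coneLe P w ((p*p)*(p*p)) := by
    have h2 := hmul_le hs1 hs1
    have h3 := hmul_le h2 h2
    refine coneLe_trans hP ?_ h3
    rw [hwdef]
    exact (coneLe_zpow_iff hP hζP).2 (by omega)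
  have hpp_pos : coneLt P 1 (p*p) := by
    rw [coneLt_one_left]
    exact hP.1 _ (coneLt_one_left.1 hp_pos) _ (coneLt_one_left.1 hp_pos)
  -- representative computations
  have hrep_one : rep (1:H') = 1 :=
    hrep_of 1 (coneLe_refl 1) (coneLt_one_left.2 hwP)
  have hrep_p : rep p = p := hrep_of p (coneLe_of_lt hp_pos) hpw
  have hrep_pp : rep (p*p) = p*p := hrep_of _ (coneLe_of_lt hpp_pos) hp2w
  have hinv_lt_one : ∀ {t : H'}, coneLt P 1 t → coneLt P t⁻¹ 1 := by
    intro t ht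
    show t⁻¹⁻¹ * 1 ∈ P
    rw [inv_inv, mul_one]
    exact coneLt_one_left.1 ht
  have hwinv_le : ∀ {t : H'}, coneLt P t w → coneLe P w⁻¹ t⁻¹ := by
    intro t ht
    left
    show w⁻¹⁻¹ * t⁻¹ ∈ P
    rw [inv_inv]
    rw [show w * t⁻¹ = t⁻¹ * w from hwc t⁻¹]
    exact ht
  have hrep_pinv : rep p⁻¹ = w * p⁻¹ :=
    hrep_neg p⁻¹ (hwinv_le hpw) (hinv_lt_one hp_pos)
  have hrep_ppinv : rep (p*p)⁻¹ = w * (p*p)⁻¹ :=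
    hrep_neg _ (hwinv_le hp2w) (hinv_lt_one hpp_pos)
  refine ⟨n, hnN, hn1, cyc L, ⟨?_, ?_, ?_, ?_⟩, ?_, ?_⟩
  · exact fun g1 g2 g3 => cyc_eq_zero_iff hLsto g1 g2 g3
  · exact fun g1 g2 g3 => cyc_values L g1 g2 g3
  · exact fun g1 g2 g3 g4 => cyc_cocycle hLsto g1 g2 g3 g4
  · -- left invariance
    intro g g1 g2 g3
    set u : H' := φ g with hudef
    have hur_bounds : ∀ x : Γ, coneLe P (w^(F u)) (u * rep (φ x)) ∧
        coneLt P (u * rep (φ x)) (w^(F u + 2)) := by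
      intro x
      constructor
      · refine coneLe_trans hP (hF1 u) ?_
        have h1 : coneLe P (u * 1) (u * rep (φ x)) := (coneLe_mul_left u).2 (hrep1 _)
        rwa [mul_one] at h1
      · have h1 : coneLt P (u * rep (φ x)) (u * w) := (coneLt_mul_left u).2 (hrep2 _)
        rw [← hwc u] at h1
        have h3 : coneLt P (w * u) (w * w^(F u + 1)) := (coneLt_mul_left w).2 (hF2 u)
        rw [show w * w^(F u + 1) = w^(F u + 2) by
          rw [← zpow_one_add, show 1 + (F u + 1) = F u + 2 by ring]] at h3
        exact coneLt_trans hP h1 h3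
    have hdichot : ∀ x : Γ, F (u * rep (φ x)) = F u ∨ F (u * rep (φ x)) = F u + 1 := by
      intro x
      obtain ⟨hb1, hb2⟩ := hur_bounds x
      have l1 : F u < F (u * rep (φ x)) + 1 :=
        (coneLt_zpow_iff hP hwP).1 (coneLe_trans_lt hP hb1 (hF2 _))
      have l2 : F (u * rep (φ x)) < F u + 2 :=
        (coneLt_zpow_iff hP hwP).1 (coneLe_trans_lt hP (hF1 _) hb2)
      omega
    have hwcz : ∀ (j : ℤ) (h : H'), w^j * h = h * w^j := by
      intro j h
      rw [hwz j]
      exact central_zpow hζc _ h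
    have hrep_mul : ∀ x : Γ,
        rep (φ (g * x)) = w^(-(F (u * rep (φ x)))) * (u * rep (φ x)) := by
      intro x
      have e1 : φ (g*x) = w^(F (φ x)) * (u * rep (φ x)) := by
        rw [map_mul, ← hudef]
        conv_lhs => rw [hrep_decomp (φ x)]
        rw [← mul_assoc, ← hwcz (F (φ x)) u, mul_assoc]
      have e2 : F (φ (g*x)) = F (φ x) + F (u * rep (φ x)) := by
        rw [e1, hF_shift]
      have e0 : rep (φ (g * x)) = w ^ (-(F (φ (g * x)))) * φ (g * x) := rfl
      rw [e0, e2, e1, ← mul_assoc, ← zpow_add,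
        show -(F (φ x) + F (u * rep (φ x))) + F (φ x) = -(F (u * rep (φ x))) by ring]
    set B : Γ → Prop := fun x => F (u * rep (φ x)) = F u + 1 with hBdef
    have key := cyc_congr_rot L (fun a b' => L (g*a) (g*b')) B Set.univ ?_ ?_
      (Set.mem_univ g1) (Set.mem_univ g2) (Set.mem_univ g3)
    · exact key.symm
    · -- hsame
      rintro q1 - q2 - hiff
      have hq1 : F (u * rep (φ q1)) = F (u * rep (φ q2)) := by
        simp only [hBdef] at hiff
        rcases hdichot q1 with h1 | h1 <;> rcases hdichot q2 with h2 | h2 <;> omega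
      have hmc : (g*q1)⁻¹ * (g*q2) = q1⁻¹ * q2 := by group
      have hlt_iff : coneLt P (rep (φ (g*q1))) (rep (φ (g*q2))) ↔
          coneLt P (rep (φ q1)) (rep (φ q2)) := by
        rw [hrep_mul q1, hrep_mul q2, hq1, coneLt_mul_left, coneLt_mul_left]
      have heq_iff : rep (φ (g*q1)) = rep (φ (g*q2)) ↔ rep (φ q1) = rep (φ q2) := by
        rw [hrep_mul q1, hrep_mul q2, hq1, mul_right_inj, mul_right_inj]
      simp only [hLdef]
      rw [hmc, hlt_iff, heq_iff]
    · -- hcross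
      rintro q1 - q2 - hnB hB2
      simp only [hBdef] at hnB hB2
      have hq1 : F (u * rep (φ q1)) = F u := (hdichot q1).resolve_right hnB
      have h1 : coneLt P (u * rep (φ q1)) (u * rep (φ q2)) := by
        have a1 : coneLt P (u * rep (φ q1)) (w^(F u + 1)) := by
          have := hF2 (u * rep (φ q1))
          rwa [hq1] at this
        have a2 : coneLe P (w^(F u + 1)) (u * rep (φ q2)) := by
          have := hF1 (u * rep (φ q2))
          rwa [hB2] at this
        exact coneLt_trans_le hP a1 a2
      have hrpq : coneLt P (rep (φ q1)) (rep (φ q2)) := (coneLt_mul_left u).1 h1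
      have hgq : coneLt P (rep (φ (g*q2))) (rep (φ (g*q1))) := by
        rw [hrep_mul q1, hrep_mul q2, hq1, hB2]
        have b1 : coneLt P (rep (φ q2)) (w * rep (φ q1)) := by
          have c2 : coneLe P (w * 1) (w * rep (φ q1)) := (coneLe_mul_left w).2 (hrep1 _)
          rw [mul_one] at c2
          exact coneLt_trans_le hP (hrep2 _) c2
        have b2 := (coneLt_mul_left u).2 b1
        rw [show u * (w * rep (φ q1)) = w * (u * rep (φ q1)) by
          rw [← mul_assoc, ← hwc u, mul_assoc]] at b2
        have e5 : w^(-(F u)) * (u * rep (φ q1)) =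
            w^(-(F u + 1)) * (w * (u * rep (φ q1))) := by
          rw [← mul_assoc (w^(-(F u + 1)))]
          congr 1
          rw [← zpow_add_one, show -(F u + 1) + 1 = -(F u) by ring]
        rw [e5]
        exact (coneLt_mul_left _).2 b2
      refine ⟨Or.inl hrpq, ?_, Or.inl hgq, ?_⟩
      · simp only [hLdef]
        rintro (h | ⟨e, -⟩)
        · exact coneLt_asymm hP hrpq h
        · exact coneLt_ne hP hrpq e.symm
      · simp only [hLdef]
        rintro (h | ⟨e, -⟩)
        · exact coneLt_asymm hP hgq h
        · exact coneLt_ne hP hgq e.symm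
  · -- not secret
    rintro ⟨R, hR, hceq⟩
    have hwcomm : ∀ t : H', t * w⁻¹ = w⁻¹ * t := by
      intro t
      calc t * w⁻¹ = w⁻¹ * (w * t) * w⁻¹ := by group
        _ = w⁻¹ * (t * w) * w⁻¹ := by rw [hwc t]
        _ = w⁻¹ * t := by group
    have hA1 : L 1 b := by
      simp only [hLdef]
      left
      rw [map_one, hrep_one, ← hpdef, hrep_p]
      exact hp_pos
    have hA2 : L b b⁻¹ := by
      simp only [hLdef]
      left
      rw [map_inv, ← hpdef, hrep_p, hrep_pinv]
      show p⁻¹ * (w * p⁻¹) ∈ P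
      rw [show p⁻¹ * (w * p⁻¹) = (p*p)⁻¹ * w by rw [hwc p⁻¹]; group]
      exact hp2w
    have hval1 : cyc L b⁻¹ 1 b = 1 := by
      unfold cyc
      rw [if_pos (Or.inr (Or.inl ⟨hA1, hA2⟩))]
    have hrepbb : rep (φ (b*b)) = p*p := by rw [map_mul, ← hpdef, hrep_pp]
    have hrepbbinv : rep (φ ((b*b)⁻¹)) = w * (p*p)⁻¹ := by
      rw [map_inv, map_mul, ← hpdef, hrep_ppinv]
    have hppw_ne : p*p ≠ w := coneLt_ne hP hp2w
    have hone_rep : rep (φ (1:Γ)) = 1 := by rw [map_one, hrep_one]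
    have hw_ne_one : w ≠ 1 := by
      intro e
      exact hP.one_not_mem (e ▸ hwP)
    have hwinv_notP : w⁻¹ ∉ P := by
      intro hmem
      have := hP.1 _ hwP _ hmem
      rw [mul_inv_cancel] at this
      exact hP.one_not_mem this
    have hXn : ¬ L ((b*b)⁻¹) 1 := by
      simp only [hLdef]
      rw [hone_rep, hrepbbinv]
      rintro (h | ⟨e, -⟩)
      · have h2 : (w * (p*p)⁻¹)⁻¹ * 1 ∈ P := h
        rw [mul_one, mul_inv_rev, inv_inv, hwcomm (p*p)] at h2
        exact coneLt_asymm hP hp2w h2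
      · exact hppw_ne (mul_inv_eq_one.1 e).symm
    have hZXn : ¬ L (b*b) ((b*b)⁻¹) := by
      simp only [hLdef]
      rw [hrepbb, hrepbbinv]
      rintro (h | ⟨e, hq⟩)
      · have h2 : (p*p)⁻¹ * (w * (p*p)⁻¹) ∈ P := h
        rw [show (p*p)⁻¹ * (w * (p*p)⁻¹) = ((p*p)*(p*p))⁻¹ * w by
          rw [hwc (p*p)⁻¹]; group] at h2
        rcases hwp4 with hl | he
        · exact coneLt_asymm hP h2 hl
        · rw [← he] at h2
          exact coneLt_irrefl hP w h2
      · have e2 : (p*p)*(p*p) = w := eq_mul_inv_iff_mul_eq.1 e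
        have hφ : φ ((b*b)⁻¹ * (b*b)⁻¹) = w⁻¹ := by
          rw [map_mul, map_inv, map_mul, ← hpdef, ← e2]
          group
        have hne1 : φ ((b*b)⁻¹ * (b*b)⁻¹) ≠ 1 := by
          rw [hφ]
          intro e3
          exact hw_ne_one (by rw [← inv_inv w, e3, inv_one])
        have hmem := (hlex _ hne1).1 hq
        rw [hφ] at hmem
        exact hwinv_notP hmem
    have hZYn : ¬ L (b*b) 1 := by
      simp only [hLdef]
      rw [hrepbb, hone_rep]
      rintro (h | ⟨e, -⟩)
      · have h2 : (p*p)⁻¹ * 1 ∈ P := h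
        rw [mul_one] at h2
        have h3 := hP.1 _ (coneLt_one_left.1 hpp_pos) _ h2
        rw [mul_inv_cancel] at h3
        exact hP.one_not_mem h3
      · exact coneLt_ne hP hpp_pos e.symm
    have hYX : L 1 ((b*b)⁻¹) := by
      simp only [hLdef]
      left
      rw [hone_rep, hrepbbinv]
      show (1:H')⁻¹ * (w * (p*p)⁻¹) ∈ P
      rw [show (1:H')⁻¹ * (w * (p*p)⁻¹) = (p*p)⁻¹ * w by rw [hwc (p*p)⁻¹]; group]
      exact hp2w
    have hXZ : L ((b*b)⁻¹) (b*b) := by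
      simp only [hLdef]
      rw [hrepbb, hrepbbinv]
      rcases hwp4 with hl | he
      · left
        show (w * (p*p)⁻¹)⁻¹ * (p*p) ∈ P
        rw [show (w * (p*p)⁻¹)⁻¹ * (p*p) = w⁻¹ * ((p*p)*(p*p)) by
          rw [mul_inv_rev, inv_inv, hwcomm (p*p)]; group]
        exact hl
      · right
        constructor
        · rw [he, mul_inv_cancel_right]
        · have hφ : φ (((b*b)⁻¹)⁻¹ * (b*b)) = (p*p)*(p*p) := by
            rw [inv_inv, map_mul, map_mul, ← hpdef]
          have hne1 : φ (((b*b)⁻¹)⁻¹ * (b*b)) ≠ 1 := by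
            rw [hφ, ← he]
            exact hw_ne_one
          apply (hlex _ hne1).2
          rw [hφ, ← he]
          exact hwP
    have hcond1 : ¬ ((L ((b*b)⁻¹) 1 ∧ L 1 (b*b)) ∨ (L 1 (b*b) ∧ L (b*b) ((b*b)⁻¹)) ∨
        (L (b*b) ((b*b)⁻¹) ∧ L ((b*b)⁻¹) 1)) := by
      rintro (⟨h, -⟩ | ⟨-, h⟩ | ⟨h, -⟩)
      · exact hXn h
      · exact hZXn h
      · exact hZXn h
    have hval2 : cyc L ((b*b)⁻¹) 1 (b*b) = -1 := by
      unfold cyc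
      rw [if_neg hcond1, if_pos (Or.inr (Or.inl ⟨hYX, hXZ⟩))]
    have v1 : circOfCone R b⁻¹ 1 b = 1 := by rw [← hceq]; exact hval1
    have v2 : circOfCone R ((b*b)⁻¹) 1 (b*b) = -1 := by rw [← hceq]; exact hval2
    have hbR : b ∈ R := by
      simp only [circOfCone] at v1
      split_ifs at v1 with h1 h2
      · simp only [coneLt, inv_inv, mul_one, one_mul, inv_one] at h1
        tauto
      all_goals norm_num at v1
    have hbbR : b*b ∈ R := hR.1 _ hbR _ hbR
    have c1 : coneLt R ((b*b)⁻¹) 1 := by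
      show ((b*b)⁻¹)⁻¹ * 1 ∈ R
      rw [inv_inv, mul_one]
      exact hbbR
    have c2 : coneLt R 1 (b*b) := by
      show (1:Γ)⁻¹ * (b*b) ∈ R
      rw [inv_one, one_mul]
      exact hbbR
    have v3 : circOfCone R ((b*b)⁻¹) 1 (b*b) = 1 := by
      simp only [circOfCone]
      rw [if_pos (Or.inl ⟨c1, c2⟩)]
    rw [v2] at v3
    norm_num at v3
  · -- agreement
    intro x y z hpair helem
    set Λ : Γ → Γ → Prop :=
      fun a b' => coneLt P (φ a) (φ b') ∨ (φ a = φ b' ∧ a⁻¹ * b' ∈ Q) with hΛdef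
    have hQΛ : ∀ a b' : Γ, coneLt Q a b' ↔ Λ a b' := by
      intro a b'
      simp only [hΛdef]
      by_cases hker : φ (a⁻¹ * b') = 1
      · have he : φ a = φ b' := by
          rw [map_mul, map_inv] at hker
          exact inv_mul_eq_one.1 hker
        constructor
        · intro h
          exact Or.inr ⟨he, h⟩
        · rintro (h | ⟨-, hq⟩)
          · rw [he] at h
            exact absurd h (coneLt_irrefl hP _)
          · exact hq
      · have hiff := hlex _ hker
        have he2 : φ (a⁻¹*b') = (φ a)⁻¹ * φ b' := by rw [map_mul, map_inv]
        have hne : φ a ≠ φ b' := by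
          intro e
          exact hker (by rw [he2, e, inv_mul_cancel])
        constructor
        · intro h
          left
          have hmem := hiff.1 h
          rwa [he2] at hmem
        · rintro (h | ⟨e, -⟩)
          · exact hiff.2 (by rw [he2]; exact h)
          · exact absurd e hne
    have hxS : x ∈ ({x,y,z} : Set Γ) := by simp
    have hyS : y ∈ ({x,y,z} : Set Γ) := by simp
    have hzS : z ∈ ({x,y,z} : Set Γ) := by simp
    have hrep_e : ∀ e ∈ ({x,y,z} : Set Γ),
        (coneLt P (φ e) 1 → rep (φ e) = w * φ e) ∧
        (¬ coneLt P (φ e) 1 → rep (φ e) = φ e) := by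
      intro e he
      obtain ⟨hlo, hhi⟩ := helem e he
      constructor
      · intro hn
        apply hrep_neg
        · left
          rw [hwdef, ← zpow_neg]
          exact hlo
        · exact hn
      · intro hn
        apply hrep_of
        · exact coneLe_of_not_lt hP hn
        · rw [hwdef]
          exact hhi
    have hstep : cyc L x y z = cyc Λ x y z := by
      apply cyc_congr_rot L Λ (fun e => coneLt P (φ e) 1) ({x,y,z} : Set Γ)
        ?_ ?_ hxS hyS hzS
      · intro q1 hq1 q2 hq2 hiff
        simp only [hLdef, hΛdef]
        by_cases hneg : coneLt P (φ q1) 1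
        · have hneg2 := hiff.1 hneg
          rw [(hrep_e q1 hq1).1 hneg, (hrep_e q2 hq2).1 hneg2,
            coneLt_mul_left, mul_right_inj]
        · have hneg2 := fun h => hneg (hiff.2 h)
          rw [(hrep_e q1 hq1).2 hneg, (hrep_e q2 hq2).2 hneg2]
      · intro q1 hq1 q2 hq2 hnB hB2
        have hr1 : rep (φ q1) = φ q1 := (hrep_e q1 hq1).2 hnB
        have hr2 : rep (φ q2) = w * φ q2 := (hrep_e q2 hq2).1 hB2
        have hlt : coneLt P (rep (φ q1)) (rep (φ q2)) := by
          rw [hr1, hr2]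
          show (φ q1)⁻¹ * (w * φ q2) ∈ P
          have hp' : (ζ^(-n : ℤ))⁻¹ * ((φ q1)⁻¹ * φ q2) ∈ P := hpair q1 hq1 q2 hq2
          rwa [show (ζ^(-n:ℤ))⁻¹ * ((φ q1)⁻¹ * φ q2) = (φ q1)⁻¹ * (w * φ q2) by
            rw [zpow_neg, inv_inv, ← hwdef, ← mul_assoc, hwc ((φ q1)⁻¹), mul_assoc]] at hp'
        have hltΛ : coneLt P (φ q2) (φ q1) :=
          coneLt_trans_le hP hB2 (coneLe_of_not_lt hP hnB)
        refine ⟨?_, ?_, ?_, ?_⟩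
        · simp only [hLdef]
          exact Or.inl hlt
        · simp only [hLdef]
          rintro (h | ⟨e, -⟩)
          · exact coneLt_asymm hP hlt h
          · exact coneLt_ne hP hlt e.symm
        · simp only [hΛdef]
          exact Or.inl hltΛ
        · simp only [hΛdef]
          rintro (h | ⟨e, -⟩)
          · exact coneLt_asymm hP hltΛ h
          · exact coneLt_ne hP hltΛ e.symm
    rw [hstep, circOfCone_eq_cyc]
    exact (cyc_ext hQΛ x y z).symm


end Main

end Aux

/-- Proposition 6.3: let `(H,<)` be a left-ordered group (ordering given by the cone `P`)
admitting a cofinal central element, and let `φ : G → H` be a homomorphism with cofinal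
image.  If `≺` (with cone `Q`) is a left-ordering of `G` lexicographic with respect to
`1 → ker φ → G → φ(G) → 1` (i.e. for `g ∉ ker φ`, `id ≺ g` iff `id < φ(g)`), then the
secret left-ordering `c_≺` is an accumulation point of the genuine circular orderings:
every open neighbourhood of it contains a genuine circular ordering of `G`. -/
theorem stmt17 {H : Type*} [Group H] (P : Set H) (hP : IsPositiveCone P)
    (z : H) (hzcentral : ∀ h : H, z * h = h * z)
    (hzcofinal : ∀ h : H, ∃ m k : ℤ, coneLt P (z ^ m) h ∧ coneLt P h (z ^ k))
    (φ : G →* H)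
    (himgcofinal : ∀ h : H, ∃ a b : G, coneLt P (φ a) h ∧ coneLt P h (φ b))
    (Q : Set G) (hQ : IsPositiveCone Q)
    (hlex : ∀ g : G, φ g ≠ 1 → (g ∈ Q ↔ φ g ∈ P)) :
    ∀ csec : CircOrd G, csec.1 = circOfCone Q →
      ∀ U : Set (CircOrd G), IsOpen U → csec ∈ U →
        ∃ d : CircOrd G, d ∈ U ∧ ¬ IsSecret d.1 := by
  intro csec hcsec U hU hcU
  classical
  have hz_ne : z ≠ 1 := by
    rintro rfl
    obtain ⟨m, k, h1, h2⟩ := hzcofinal 1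
    rw [one_zpow] at h1
    exact coneLt_irrefl hP 1 h1
  obtain ⟨ζ, hζc, hζP, hζcof⟩ :
      ∃ ζ : H, (∀ h : H, ζ * h = h * ζ) ∧ ζ ∈ P ∧
        ∀ h : H, ∃ m k : ℤ, coneLt P (ζ^m) h ∧ coneLt P h (ζ^k) := by
    have hz_mem : z ∈ P ∪ P⁻¹ := by rw [hP.2]; exact hz_ne
    rcases hz_mem with hzP | hzP
    · exact ⟨z, hzcentral, hzP, hzcofinal⟩
    · refine ⟨z⁻¹, ?_, hzP, ?_⟩
      · intro h
        exact (Commute.inv_left (hzcentral h)).eq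
      · intro h
        obtain ⟨m, k, h1, h2⟩ := hzcofinal h
        refine ⟨-m, -k, ?_, ?_⟩
        · rwa [zpow_neg, inv_zpow, inv_inv]
        · rwa [zpow_neg, inv_zpow, inv_inv]
  have key := fun k : ℕ =>
    main_construct P hP ζ hζc hζP hζcof φ himgcofinal Q hQ hlex (k:ℤ)
      (Int.natCast_nonneg k)
  choose nn hnk hn1 c hcirc hgen hagr using key
  set d : ℕ → CircOrd G := fun k => ⟨c k, hcirc k⟩ with hd
  have hconv : Filter.Tendsto d Filter.atTop (nhds csec) := by
    rw [tendsto_subtype_rng]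
    have hval : csec.1 = circOfCone Q := hcsec
    simp only [hd]
    rw [hval]
    rw [tendsto_pi_nhds]
    intro x
    rw [tendsto_pi_nhds]
    intro y
    rw [tendsto_pi_nhds]
    intro z
    apply tendsto_nhds_of_eventually_eq
    have bnd_lo : ∀ u : H, ∃ M : ℤ, ∀ n' : ℤ, M ≤ n' → coneLt P (ζ^(-n')) u := by
      intro u
      obtain ⟨m, k0, h1, h2⟩ := hζcof u
      exact ⟨-m, fun n' hn' =>
        coneLe_trans_lt hP ((coneLe_zpow_iff hP hζP).2 (by omega)) h1⟩
    have bnd_hi : ∀ u : H, ∃ M : ℤ, ∀ n' : ℤ, M ≤ n' → coneLt P u (ζ^n') := by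
      intro u
      obtain ⟨m, k0, h1, h2⟩ := hζcof u
      exact ⟨k0, fun n' hn' => coneLt_trans_le hP h2 ((coneLe_zpow_iff hP hζP).2 hn')⟩
    have pairbnd : ∃ M : ℤ, ∀ n' : ℤ, M ≤ n' →
        ∀ p ∈ ({x,y,z} : Set G), ∀ q ∈ ({x,y,z} : Set G),
          coneLt P (ζ^(-n')) ((φ p)⁻¹ * φ q) := by
      obtain ⟨Mxx, hxx⟩ := bnd_lo ((φ x)⁻¹ * φ x)
      obtain ⟨Mxy, hxy⟩ := bnd_lo ((φ x)⁻¹ * φ y)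
      obtain ⟨Mxz, hxz⟩ := bnd_lo ((φ x)⁻¹ * φ z)
      obtain ⟨Myx, hyx⟩ := bnd_lo ((φ y)⁻¹ * φ x)
      obtain ⟨Myy, hyy⟩ := bnd_lo ((φ y)⁻¹ * φ y)
      obtain ⟨Myz, hyz⟩ := bnd_lo ((φ y)⁻¹ * φ z)
      obtain ⟨Mzx, hzx⟩ := bnd_lo ((φ z)⁻¹ * φ x)
      obtain ⟨Mzy, hzy⟩ := bnd_lo ((φ z)⁻¹ * φ y)
      obtain ⟨Mzz, hzz⟩ := bnd_lo ((φ z)⁻¹ * φ z)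
      refine ⟨max Mxx (max Mxy (max Mxz (max Myx (max Myy (max Myz
        (max Mzx (max Mzy Mzz))))))), ?_⟩
      intro n' hn' p hp q hq
      simp only [Set.mem_insert_iff, Set.mem_singleton_iff] at hp hq
      rcases hp with rfl | rfl | rfl <;> rcases hq with rfl | rfl | rfl
      · exact hxx n' (by omega)
      · exact hxy n' (by omega)
      · exact hxz n' (by omega)
      · exact hyx n' (by omega)
      · exact hyy n' (by omega)
      · exact hyz n' (by omega)
      · exact hzx n' (by omega)
      · exact hzy n' (by omega)
      · exact hzz n' (by omega)
    have elembnd : ∃ M : ℤ, ∀ n' : ℤ, M ≤ n' →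
        ∀ e ∈ ({x,y,z} : Set G),
          coneLt P (ζ^(-n')) (φ e) ∧ coneLt P (φ e) (ζ^n') := by
      obtain ⟨Mx1, hx1⟩ := bnd_lo (φ x)
      obtain ⟨My1, hy1⟩ := bnd_lo (φ y)
      obtain ⟨Mz1, hz1⟩ := bnd_lo (φ z)
      obtain ⟨Mx2, hx2⟩ := bnd_hi (φ x)
      obtain ⟨My2, hy2⟩ := bnd_hi (φ y)
      obtain ⟨Mz2, hz2⟩ := bnd_hi (φ z)
      refine ⟨max Mx1 (max My1 (max Mz1 (max Mx2 (max My2 Mz2)))), ?_⟩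
      intro n' hn' e he
      simp only [Set.mem_insert_iff, Set.mem_singleton_iff] at he
      rcases he with rfl | rfl | rfl
      · exact ⟨hx1 n' (by omega), hx2 n' (by omega)⟩
      · exact ⟨hy1 n' (by omega), hy2 n' (by omega)⟩
      · exact ⟨hz1 n' (by omega), hz2 n' (by omega)⟩
    obtain ⟨Mp, hMp⟩ := pairbnd
    obtain ⟨Me, hMe⟩ := elembnd
    filter_upwards [Filter.eventually_ge_atTop (max Mp Me).toNat] with k hk
    have hk' : max Mp Me ≤ (k:ℤ) := Int.toNat_le.1 hk
    have hkn : max Mp Me ≤ nn k := le_trans hk' (hnk k)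
    exact hagr k x y z (hMp (nn k) (by omega)) (hMe (nn k) (by omega))
  have hev : ∀ᶠ k in Filter.atTop, d k ∈ U := hconv.eventually_mem (hU.mem_nhds hcU)
  obtain ⟨k, hkU⟩ := hev.exists
  exact ⟨d k, hkU, hgen k⟩

end Paper
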